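/- arXiv:1905.04826 — 2 statements merged into one kernel-verified Lean document; each statement's English description precedes it below -/
import Mathlib

section
/- Let $S_0 = k[x_0,\dots,x_{n+e}]$, let $J = (x_0,\dots,x_{e-1})$, let $u$ be a monomial of degree $r$ in $x_0,\dots,x_{e-1}$ and $v$ a monomial of positive degree in $x_e,\dots,x_{n+e}$. Then $\deg(S_0/(J^{r+1}+(uv))) = \binom{e+r}{e} - 1$, where $\deg$ denotes the degree (multiplicity) of the graded ring. -/
open MvPolynomial Filter

/-- The irrelevant maximal ideal `(x_0, ..., x_{N-1})` of the polynomial ring. -/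
noncomputable def varIdeal (k : Type) [Field k] (N : ℕ) : Ideal (MvPolynomial (Fin N) k) :=
  Ideal.span (Set.range MvPolynomial.X)

/-- An ideal of the polynomial ring is homogeneous. -/
def IsHomIdeal {k : Type} [Field k] {N : ℕ} (I : Ideal (MvPolynomial (Fin N) k)) : Prop :=
  ∀ f ∈ I, ∀ d : ℕ, MvPolynomial.homogeneousComponent d f ∈ I

/-- `f` is a monomial (with coefficient 1) of degree `d` all of whose variables satisfy `P`. -/
def IsMonomialSupp {k : Type} [Field k] {N : ℕ} (f : MvPolynomial (Fin N) k)
    (P : Fin N → Prop) (d : ℕ) : Prop :=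
  ∃ m : Fin N →₀ ℕ, f = MvPolynomial.monomial m 1 ∧ (∀ i, m i ≠ 0 → P i) ∧
    (m.sum fun _ e => e) = d

/-- The ideal generated by the first `e` variables. -/
noncomputable def lowIdeal (k : Type) [Field k] (N e : ℕ) : Ideal (MvPolynomial (Fin N) k) :=
  Ideal.span { f | ∃ i : Fin N, (i : ℕ) < e ∧ f = MvPolynomial.X i }

/-- `β` is the table of graded Betti numbers of a minimal graded free resolution of `S/I`:
there are graded free modules `F i` with `β i j` generators in degree `j`, degree-preserving
differentials with entries vanishing at the irrelevant maximal ideal (minimality),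
forming an exact complex resolving `S/I`. -/
def IsBettiTable {k : Type} [Field k] {N : ℕ} (I : Ideal (MvPolynomial (Fin N) k))
    (β : ℕ → ℕ → ℕ) : Prop :=
  ∃ (φ : ∀ i : ℕ, ((Σ j : ℕ, Fin (β (i+1) j)) →₀ MvPolynomial (Fin N) k) →ₗ[MvPolynomial (Fin N) k]
         ((Σ j : ℕ, Fin (β i j)) →₀ MvPolynomial (Fin N) k))
    (ε : ((Σ j : ℕ, Fin (β 0 j)) →₀ MvPolynomial (Fin N) k) →ₗ[MvPolynomial (Fin N) k]
         (MvPolynomial (Fin N) k ⧸ I)),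
    Function.Surjective ε ∧
    LinearMap.ker ε = LinearMap.range (φ 0) ∧
    (∀ i, LinearMap.ker (φ i) = LinearMap.range (φ (i+1))) ∧
    (∀ p : Σ j : ℕ, Fin (β 0 j), ∃ g : MvPolynomial (Fin N) k,
        g.IsHomogeneous p.1 ∧ ε (Finsupp.single p 1) = Ideal.Quotient.mk I g) ∧
    (∀ i, ∀ p : Σ j : ℕ, Fin (β (i+1) j), ∀ q : Σ j : ℕ, Fin (β i j),
        ((φ i (Finsupp.single p 1)) q).IsHomogeneous (p.1 - q.1) ∧
        (q.1 ≤ p.1 ∨ (φ i (Finsupp.single p 1)) q = 0)) ∧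
    (∀ i, ∀ p : Σ j : ℕ, Fin (β (i+1) j), ∀ q : Σ j : ℕ, Fin (β i j),
        MvPolynomial.constantCoeff ((φ i (Finsupp.single p 1)) q) = 0)

/-- `β` is the table of graded Betti numbers of the ideal `I`
(obtained from a minimal free resolution of `S/I` by shifting the homological index). -/
def IdealBetti {k : Type} [Field k] {N : ℕ} (I : Ideal (MvPolynomial (Fin N) k))
    (β : ℕ → ℕ → ℕ) : Prop :=
  ∃ βQ : ℕ → ℕ → ℕ, IsBettiTable I βQ ∧ βQ 0 0 = 1 ∧ (∀ j, 0 < j → βQ 0 j = 0) ∧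
    ∀ i j, β i j = βQ (i+1) j

/-- The ideal `I` has a `d`-linear minimal free resolution. -/
def HasLinearRes {k : Type} [Field k] {N : ℕ} (I : Ideal (MvPolynomial (Fin N) k))
    (d : ℕ) : Prop :=
  ∃ β : ℕ → ℕ → ℕ, IdealBetti I β ∧ ∀ i j, β i j ≠ 0 → j = i + d

/-- The ideal generated by the homogeneous elements of degree `d` in `I`. -/
noncomputable def componentIdeal {k : Type} [Field k] {N : ℕ} (I : Ideal (MvPolynomial (Fin N) k))
    (d : ℕ) : Ideal (MvPolynomial (Fin N) k) :=
  Ideal.span { f | f ∈ I ∧ f.IsHomogeneous d }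

/-- `I` is componentwise linear. -/
def ComponentwiseLinear {k : Type} [Field k] {N : ℕ}
    (I : Ideal (MvPolynomial (Fin N) k)) : Prop :=
  ∀ d : ℕ, 0 < d → HasLinearRes (componentIdeal I d) d

/-- The Castelnuovo-Mumford regularity of `S/I` equals `ρ`:
`ρ = max { j - i : β_{i,j}(S/I) ≠ 0 }`. -/
def HasRegularity {k : Type} [Field k] {N : ℕ} (I : Ideal (MvPolynomial (Fin N) k))
    (ρ : ℕ) : Prop :=
  ∃ β : ℕ → ℕ → ℕ, IsBettiTable I β ∧ (∀ i j, β i j ≠ 0 → j ≤ i + ρ) ∧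
    ∃ i j, β i j ≠ 0 ∧ j = i + ρ

/-- The Hilbert function of `S/I` : `dim_k (S/I)_t`. -/
noncomputable def hilb {k : Type} [Field k] {N : ℕ} (I : Ideal (MvPolynomial (Fin N) k))
    (t : ℕ) : ℕ :=
  Module.finrank k (MvPolynomial.homogeneousSubmodule (Fin N) k t) -
  Module.finrank k
    ((Submodule.restrictScalars k (I : Submodule (MvPolynomial (Fin N) k) (MvPolynomial (Fin N) k))
      ⊓ MvPolynomial.homogeneousSubmodule (Fin N) k t : Submodule k (MvPolynomial (Fin N) k)))

/-- `S/I`, of Krull dimension `dim`, has degree (multiplicity) `D`: the Hilbert polynomial has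
degree `dim - 1` and leading coefficient `D / (dim - 1)!`. -/
def HasDegree {k : Type} [Field k] {N : ℕ} (I : Ideal (MvPolynomial (Fin N) k))
    (dim D : ℕ) : Prop :=
  ∃ p : Polynomial ℚ, p.natDegree = dim - 1 ∧
    p.leadingCoeff * (Nat.factorial (dim - 1) : ℚ) = D ∧
    ∀ᶠ t : ℕ in atTop, (hilb I t : ℚ) = p.eval (t : ℚ)

/-- The (graded) depth of `S/I` is at least `t`: there is a regular sequence of length `t`
on `S/I` inside the irrelevant maximal ideal. -/
def HasDepthGE {k : Type} [Field k] {N : ℕ} (I : Ideal (MvPolynomial (Fin N) k))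
    (t : ℕ) : Prop :=
  ∃ rs : List (MvPolynomial (Fin N) k), rs.length = t ∧ (∀ x ∈ rs, x ∈ varIdeal k N) ∧
    RingTheory.Sequence.IsRegular (MvPolynomial (Fin N) k ⧸ I) rs

/-- The depth of `S/I` is exactly `t`. -/
def HasDepth {k : Type} [Field k] {N : ℕ} (I : Ideal (MvPolynomial (Fin N) k))
    (t : ℕ) : Prop :=
  HasDepthGE I t ∧ ¬ HasDepthGE I (t+1)

/-- The reduction number of `R = S/I` (of dimension `d`) is `r`: the least `s` such that for
some Noether normalization by `d` linear forms `ℓ`, `m^{s+1} ⊆ (ℓ)·m^s` holds in `R`. -/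
def HasReductionNumber {k : Type} [Field k] {N : ℕ} (I : Ideal (MvPolynomial (Fin N) k))
    (d r : ℕ) : Prop :=
  IsLeast { s : ℕ | ∃ ℓ : Fin d → MvPolynomial (Fin N) k, (∀ i, (ℓ i).IsHomogeneous 1) ∧
    (varIdeal k N) ^ (s+1) ≤ I + Ideal.span (Set.range ℓ) * (varIdeal k N) ^ s } r

/-- `S/I` is Cohen-Macaulay: depth equals Krull dimension. -/
def IsCM {k : Type} [Field k] {N : ℕ} (I : Ideal (MvPolynomial (Fin N) k)) : Prop :=
  ∃ d : ℕ, ringKrullDim (MvPolynomial (Fin N) k ⧸ I) = d ∧ HasDepthGE I d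

/-- The subscheme defined by `I` is non-degenerate: `I` contains no nonzero linear form. -/
def Nondegenerate {k : Type} [Field k] {N : ℕ} (I : Ideal (MvPolynomial (Fin N) k)) : Prop :=
  ∀ f ∈ I, f.IsHomogeneous 1 → f = 0


/-! ### Auxiliary lemmas for statement2 -/

namespace S2Aux

open Finsupp

section DegreeLemmas

variable {σ : Type*}

lemma degree_add (a b : σ →₀ ℕ) : (a + b).degree = a.degree + b.degree := by
  rw [degree_eq_weight_one, map_add]

lemma degree_mono {a b : σ →₀ ℕ} (h : a ≤ b) : a.degree ≤ b.degree := by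
  have : b = a + (b - a) := (add_tsub_cancel_of_le h).symm
  rw [this, degree_add]; omega

lemma eq_of_le_of_degree_le {a b : σ →₀ ℕ} (h : a ≤ b) (hd : b.degree ≤ a.degree) : a = b := by
  have h1 : b = a + (b - a) := (add_tsub_cancel_of_le h).symm
  have h2 : (b - a).degree = 0 := by
    have := congrArg Finsupp.degree h1
    rw [degree_add] at this; omega
  rw [Finsupp.degree_eq_zero_iff] at h2
  rw [h1, h2, add_zero]

lemma degree_single (i : σ) (c : ℕ) : (single i c).degree = c := by
  rw [degree_eq_weight_one, weight_apply]
  simp [Finsupp.sum_single_index]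

lemma exists_le_degree {w : σ →₀ ℕ} {c : ℕ} (hc : c ≤ w.degree) :
    ∃ s : σ →₀ ℕ, s ≤ w ∧ s.degree = c := by
  induction c with
  | zero => exact ⟨0, zero_le, map_zero Finsupp.degree⟩
  | succ c ih =>
    obtain ⟨s, hsw, hsd⟩ := ih (by omega)
    have hne : s ≠ w := fun h => by subst h; omega
    have : ∃ i, s i < w i := by
      by_contra hcon
      push_neg at hcon
      exact hne (le_antisymm hsw hcon)
    obtain ⟨i, hi⟩ := this
    refine ⟨s + single i 1, ?_, by rw [degree_add, hsd, degree_single]⟩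
    intro j
    by_cases hj : j = i
    · subst hj; simp; omega
    · have h0 : (single i 1 : σ →₀ ℕ) j = 0 := by
        simp [Finsupp.single_apply, Ne.symm hj, hj]
      have := hsw j
      simp only [Finsupp.add_apply, h0]
      omega

lemma degree_embDomain {β : Type*} (f : β ↪ σ) (m : β →₀ ℕ) :
    (embDomain f m).degree = m.degree := by
  rw [degree_apply, degree_apply]
  rw [support_embDomain, Finset.sum_map]
  exact Finset.sum_congr rfl fun a _ => embDomain_apply_self f m a

end DegreeLemmas

section Counting

/-- supported-and-degree equiv to finsupp on subtype -/
noncomputable def suppEquiv {σ : Type*} (p : σ → Prop) (q : ℕ → Prop) :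
    {m : σ →₀ ℕ // (∀ i ∈ m.support, p i) ∧ q m.degree} ≃
      {m' : {i // p i} →₀ ℕ // q m'.degree} := by
  classical
  have key : ∀ m : σ →₀ ℕ, (∀ i ∈ m.support, p i) →
      embDomain (Function.Embedding.subtype p) (subtypeDomain p m) = m := by
    intro m hm
    ext i
    by_cases hi : p i
    · have : i = (Function.Embedding.subtype p) ⟨i, hi⟩ := rfl
      rw [this, embDomain_apply_self]
      rfl
    · rw [embDomain_notin_range, eq_comm]
      · by_contra h
        exact hi (hm i (Finsupp.mem_support_iff.2 h))
      · rintro ⟨⟨j, hj⟩, rfl⟩; exact hi hj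
  refine
  { toFun := fun m => ⟨subtypeDomain p m.1, ?_⟩
    invFun := fun m' => ⟨embDomain (Function.Embedding.subtype p) m'.1, ?_, ?_⟩
    left_inv := ?_
    right_inv := ?_ }
  · have := key m.1 m.2.1
    have hdeg : (subtypeDomain p m.1).degree = m.1.degree := by
      conv_rhs => rw [← this]
      rw [degree_embDomain]
    rw [hdeg]; exact m.2.2
  · intro i hi
    rw [support_embDomain, Finset.mem_map] at hi
    obtain ⟨a, _, rfl⟩ := hi
    exact a.2
  · rw [degree_embDomain]; exact m'.2
  · rintro ⟨m, hm⟩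
    exact Subtype.ext (key m hm.1)
  · rintro ⟨m', hm'⟩
    apply Subtype.ext
    ext a
    show subtypeDomain p _ a = _
    rw [subtypeDomain_apply]
    conv_lhs => rw [show (a : σ) = (Function.Embedding.subtype p) a from rfl]
    rw [embDomain_apply_self]

lemma degree_eq_card_toMultiset {β : Type*} (m : β →₀ ℕ) :
    Multiset.card m.toMultiset = m.degree :=
  Finsupp.card_toMultiset m

/-- Count of exponent vectors of fixed degree. -/
lemma card_degree_eq {β : Type*} [Fintype β] [DecidableEq β] (d : ℕ) :
    Nat.card {m : β →₀ ℕ // m.degree = d} = Nat.multichoose (Fintype.card β) d := by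
  have e : {m : β →₀ ℕ // m.degree = d} ≃ Sym β d := by
    refine (Equiv.subtypeEquiv Multiset.toFinsupp.toEquiv ?_).symm
    intro s
    show Multiset.card s = d ↔ _
    rw [← degree_eq_card_toMultiset]
    rw [show (Multiset.toFinsupp.toEquiv s) = Multiset.toFinsupp s from rfl,
      Multiset.toFinsupp_toMultiset]
  rw [Nat.card_congr e, Nat.card_eq_fintype_card, Sym.card_sym_eq_multichoose]

lemma card_supported_degree {σ : Type*} [Fintype σ] [DecidableEq σ] (p : σ → Prop)
    [DecidablePred p] (d : ℕ) :
    Nat.card {m : σ →₀ ℕ | m.degree = d ∧ ∀ i ∈ m.support, p i} =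
      Nat.multichoose (Fintype.card {i // p i}) d := by
  have e0 : {m : σ →₀ ℕ | m.degree = d ∧ ∀ i ∈ m.support, p i} ≃
      {m : σ →₀ ℕ // (∀ i ∈ m.support, p i) ∧ m.degree = d} :=
    (Equiv.subtypeEquivRight (fun m => and_comm))
  rw [Nat.card_congr (e0.trans (suppEquiv p (· = d))), card_degree_eq]

lemma nat_card_sigma {ι : Type*} [Fintype ι] (f : ι → Type*) [∀ i, Fintype (f i)] :
    Nat.card (Σ i, f i) = ∑ i, Nat.card (f i) := by
  simp [Nat.card_eq_fintype_card, Fintype.card_sigma]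

end Counting

section Filters

variable {N e r : ℕ}

/-- the filter of `m` at indices `< e` -/
noncomputable def fl (e : ℕ) {N : ℕ} (m : Fin N →₀ ℕ) : Fin N →₀ ℕ :=
  m.filter (fun i => (i : ℕ) < e)

/-- the filter of `m` at indices `≥ e` -/
noncomputable def fh (e : ℕ) {N : ℕ} (m : Fin N →₀ ℕ) : Fin N →₀ ℕ :=
  m.filter (fun i => ¬ (i : ℕ) < e)

lemma fl_le (m : Fin N →₀ ℕ) : fl e m ≤ m := by
  intro j
  classical
  rw [fl, Finsupp.filter_apply]
  split <;> simp

lemma fl_support (m : Fin N →₀ ℕ) : ∀ i ∈ (fl e m).support, (i:ℕ) < e := by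
  classical
  intro i hi
  rw [fl, Finsupp.support_filter, Finset.mem_filter] at hi
  exact hi.2

lemma le_fl {s m : Fin N →₀ ℕ} (hs : ∀ i ∈ s.support, (i:ℕ) < e) (hsm : s ≤ m) :
    s ≤ fl e m := by
  classical
  intro j
  rw [fl, Finsupp.filter_apply]
  by_cases hj : (j:ℕ) < e
  · rw [if_pos hj]; exact hsm j
  · rw [if_neg hj]
    by_contra h
    exact hj (hs j (Finsupp.mem_support_iff.2 (by omega)))

lemma fh_support (m : Fin N →₀ ℕ) : ∀ i ∈ (fh e m).support, e ≤ (i:ℕ) := by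
  classical
  intro i hi
  rw [fh, Finsupp.support_filter, Finset.mem_filter] at hi
  omega

lemma fl_add_fh (m : Fin N →₀ ℕ) : fl e m + fh e m = m := by
  classical
  exact Finsupp.filter_pos_add_filter_neg m _

lemma fl_add (a b : Fin N →₀ ℕ) : fl e (a + b) = fl e a + fl e b := by
  classical
  exact Finsupp.filter_add

lemma fh_add (a b : Fin N →₀ ℕ) : fh e (a + b) = fh e a + fh e b := by
  classical
  exact Finsupp.filter_add

lemma fl_of_low {w : Fin N →₀ ℕ} (hw : ∀ i ∈ w.support, (i:ℕ) < e) : fl e w = w := by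
  classical
  ext i
  rw [fl, Finsupp.filter_apply]
  split
  · rfl
  · rename_i h
    rw [eq_comm]
    by_contra h0
    exact h (hw i (Finsupp.mem_support_iff.2 h0))

lemma fl_of_high {w : Fin N →₀ ℕ} (hw : ∀ i ∈ w.support, e ≤ (i:ℕ)) : fl e w = 0 := by
  classical
  ext i
  rw [fl, Finsupp.filter_apply]
  split
  · rename_i h
    rw [eq_comm, Finsupp.coe_zero, Pi.zero_apply, eq_comm]
    by_contra h0
    have := hw i (Finsupp.mem_support_iff.2 h0)
    omega
  · rfl

lemma fh_of_high {w : Fin N →₀ ℕ} (hw : ∀ i ∈ w.support, e ≤ (i:ℕ)) : fh e w = w := by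
  classical
  have := fl_add_fh (e := e) w
  rw [fl_of_high hw, zero_add] at this
  exact this

lemma fh_of_low {w : Fin N →₀ ℕ} (hw : ∀ i ∈ w.support, (i:ℕ) < e) : fh e w = 0 := by
  classical
  have := fl_add_fh (e := e) w
  rw [fl_of_low hw] at this
  exact add_left_cancel (a := w) (by rw [this, add_zero])

/-- the set of "high" exponent vectors of degree `d` -/
def Hset (e : ℕ) {N : ℕ} (d : ℕ) : Set (Fin N →₀ ℕ) :=
  {h : Fin N →₀ ℕ | h.degree = d ∧ ∀ i ∈ h.support, e ≤ (i:ℕ)}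

/-- the set of "low" exponent vectors of degree at most `r` -/
def Wset (e r : ℕ) {N : ℕ} : Set (Fin N →₀ ℕ) :=
  {w : Fin N →₀ ℕ | w.degree ≤ r ∧ ∀ i ∈ w.support, (i:ℕ) < e}

lemma Hset_finite (d : ℕ) : (Hset e d : Set (Fin N →₀ ℕ)).Finite :=
  (Finsupp.finite_of_degree_le d).subset (fun x hx => by
    simp only [Hset, Set.mem_setOf_eq] at hx ⊢; omega)

lemma Wset_finite : (Wset e r : Set (Fin N →₀ ℕ)).Finite :=
  (Finsupp.finite_of_degree_le r).subset (fun x hx => hx.1)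

lemma card_Hset {n e d : ℕ} :
    (Hset e d : Set (Fin (n + e + 1) →₀ ℕ)).ncard = (n + d).choose d := by
  classical
  rw [← Nat.card_coe_set_eq]
  rw [show (Hset e d : Set (Fin (n + e + 1) →₀ ℕ)) =
    {m : Fin (n + e + 1) →₀ ℕ | m.degree = d ∧ ∀ i ∈ m.support, e ≤ (i:ℕ)} from rfl]
  rw [card_supported_degree (fun i : Fin (n + e + 1) => e ≤ (i:ℕ)) d]
  have hcard : Fintype.card {i : Fin (n + e + 1) // e ≤ (i:ℕ)} = n + 1 := by
    have eqv : {i : Fin (n + e + 1) // e ≤ (i:ℕ)} ≃ Fin (n + 1) :=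
      { toFun := fun i => ⟨(i : ℕ) - e, by omega⟩
        invFun := fun j => ⟨⟨(j : ℕ) + e, by omega⟩, by simp⟩
        left_inv := fun i => by
          apply Subtype.ext
          apply Fin.ext
          have := i.2
          simp only []
          omega
        right_inv := fun j => by
          apply Fin.ext
          simp }
    rw [Fintype.card_congr eqv, Fintype.card_fin]
  rw [hcard, Nat.multichoose_eq]
  congr 1
  omega

lemma card_Wset {N e r : ℕ} (he : 1 ≤ e) (heN : e ≤ N) :
    (Wset e r : Set (Fin N →₀ ℕ)).ncard = (e + r).choose e := by
  classical
  rw [← Nat.card_coe_set_eq]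
  let Ls : ℕ → Set (Fin N →₀ ℕ) := fun s => {w | w.degree = s ∧ ∀ i ∈ w.support, (i:ℕ) < e}
  have hLfin : ∀ s, (Ls s).Finite := fun s =>
    (Finsupp.finite_of_degree_le s).subset (fun x hx => le_of_eq hx.1)
  have hWfin : (Wset e r : Set (Fin N →₀ ℕ)).Finite :=
    (Finsupp.finite_of_degree_le r).subset (fun x hx => hx.1)
  haveI : ∀ s : Fin (r+1), Fintype (Ls (s:ℕ)) := fun s => (hLfin s).fintype
  haveI : Fintype (Wset e r : Set (Fin N →₀ ℕ)) := hWfin.fintype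
  have eqv : (Wset e r : Set (Fin N →₀ ℕ)) ≃ (Σ s : Fin (r+1), Ls (s:ℕ)) :=
    { toFun := fun w => ⟨⟨w.1.degree, by have := w.2.1; omega⟩, ⟨w.1, rfl, w.2.2⟩⟩
      invFun := fun x => ⟨x.2.1, by rw [Wset, Set.mem_setOf_eq, x.2.2.1]
                                    exact ⟨by omega, x.2.2.2⟩⟩
      left_inv := fun w => rfl
      right_inv := fun x => by
        rcases x with ⟨s, w⟩
        have hd : w.1.degree = (s : ℕ) := w.2.1
        apply Sigma.ext
        · simp only []
          apply Fin.ext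
          simp [hd]
        · simp only []
          apply (Subtype.heq_iff_coe_eq ?_).2
          · rfl
          · intro x
            rw [hd] }
  rw [Nat.card_congr eqv, nat_card_sigma]
  have hcards : ∀ s : Fin (r+1), Nat.card (Ls (s:ℕ)) = (e - 1 + (s:ℕ)).choose (e - 1) := by
    intro s
    rw [show (Ls (s:ℕ)) = {m : Fin N →₀ ℕ | m.degree = (s:ℕ) ∧ ∀ i ∈ m.support, (i:ℕ) < e}
      from rfl]
    rw [card_supported_degree (fun i : Fin N => (i:ℕ) < e) (s:ℕ)]
    have hcard : Fintype.card {i : Fin N // (i:ℕ) < e} = e := by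
      have eqv2 : {i : Fin N // (i:ℕ) < e} ≃ Fin e :=
        { toFun := fun i => ⟨(i:ℕ), i.2⟩
          invFun := fun j => ⟨⟨(j:ℕ), by omega⟩, by simp⟩
          left_inv := fun i => by apply Subtype.ext; apply Fin.ext; simp
          right_inv := fun j => by apply Fin.ext; simp }
      rw [Fintype.card_congr eqv2, Fintype.card_fin]
    rw [hcard, Nat.multichoose_eq]
    rw [show e + (s:ℕ) - 1 = (e-1) + (s:ℕ) by omega]
    exact (Nat.choose_symm_add).symm
  rw [Finset.sum_congr rfl (fun s _ => hcards s)]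
  rw [Fin.sum_univ_eq_sum_range (fun s => (e - 1 + s).choose (e-1)) (r+1)]
  have : ∑ s ∈ Finset.range (r+1), (e - 1 + s).choose (e-1) =
      ∑ i ∈ Finset.Icc (e-1) (e-1+r), i.choose (e-1) := by
    rw [← Finset.Ico_add_one_right_eq_Icc, Finset.sum_Ico_eq_sum_range]
    apply Finset.sum_congr
    · congr 1; omega
    · intro i _; rfl
  rw [this, Nat.sum_Icc_choose]
  congr 1 <;> omega

end Filters

section IdealLemmas

variable {k : Type} [Field k] {N e r : ℕ}

lemma low_eq_span : lowIdeal k N e =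
    Ideal.span ((fun s => MvPolynomial.monomial s (1:k)) ''
      {s | ∃ i : Fin N, (i:ℕ) < e ∧ s = single i 1}) := by
  unfold lowIdeal
  congr 1
  ext f
  constructor
  · rintro ⟨i, hi, rfl⟩
    exact ⟨single i 1, ⟨i, hi, rfl⟩, rfl⟩
  · rintro ⟨s, ⟨i, hi, rfl⟩, rfl⟩
    exact ⟨i, hi, rfl⟩

lemma lowpow_eq_span (m : ℕ) : (lowIdeal k N e) ^ m =
    Ideal.span ((fun s => MvPolynomial.monomial s (1:k)) ''
      {s : Fin N →₀ ℕ | s.degree = m ∧ ∀ i ∈ s.support, (i:ℕ) < e}) := by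
  induction m with
  | zero =>
    rw [pow_zero]
    have hset : {s : Fin N →₀ ℕ | s.degree = 0 ∧ ∀ i ∈ s.support, (i:ℕ) < e} = {0} := by
      ext s
      simp only [Set.mem_setOf_eq, Set.mem_singleton_iff, Finsupp.degree_eq_zero_iff]
      constructor
      · rintro ⟨rfl, _⟩; rfl
      · rintro rfl; simp
    rw [hset]
    simp only [Set.image_singleton, MvPolynomial.monomial_zero', MvPolynomial.C_1]
    rw [Ideal.span_singleton_one, Ideal.one_eq_top]
  | succ m ih =>
    rw [pow_succ, ih, low_eq_span, Ideal.span_mul_span']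
    apply le_antisymm
    · rw [Ideal.span_le]
      rintro f hf
      rw [Set.mem_mul] at hf
      obtain ⟨a, ⟨s, ⟨hs1, hs2⟩, rfl⟩, b, ⟨t, ⟨i, hi, rfl⟩, rfl⟩, rfl⟩ := hf
      apply Ideal.subset_span
      refine ⟨s + single i 1, ⟨?_, ?_⟩, ?_⟩
      · rw [degree_add, hs1, degree_single]
      · intro j hj
        rcases Finset.mem_union.1 (Finsupp.support_add hj) with h | h
        · exact hs2 j h
        · have := Finsupp.support_single_subset h
          simp only [Finset.mem_singleton] at this
          subst this; exact hi
      · rw [MvPolynomial.monomial_mul, mul_one]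
    · rw [Ideal.span_le]
      rintro f ⟨s, ⟨hs1, hs2⟩, rfl⟩
      have hne : s ≠ 0 := by
        intro h; rw [h, map_zero] at hs1; omega
      obtain ⟨i, hi⟩ := Finsupp.support_nonempty_iff.2 hne
      have hile : single i 1 ≤ s := by
        intro j
        by_cases hj : j = i
        · subst hj
          simpa [Finsupp.single_apply] using
            Nat.one_le_iff_ne_zero.2 (Finsupp.mem_support_iff.1 hi)
        · simp [Finsupp.single_apply, Ne.symm hj]
      apply Ideal.subset_span
      rw [Set.mem_mul]
      refine ⟨MvPolynomial.monomial (s - single i 1) 1, ⟨s - single i 1, ⟨?_, ?_⟩, rfl⟩,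
        MvPolynomial.monomial (single i 1) 1, ⟨single i 1, ⟨i, hs2 i hi, rfl⟩, rfl⟩, ?_⟩
      · have : (s - single i 1) + single i 1 = s := tsub_add_cancel_of_le hile
        have hd := congrArg Finsupp.degree this
        rw [degree_add, degree_single] at hd
        omega
      · intro j hj
        apply hs2
        rw [Finsupp.mem_support_iff] at hj ⊢
        intro h0
        apply hj
        rw [Finsupp.tsub_apply, h0]
        simp
      · rw [MvPolynomial.monomial_mul, mul_one, tsub_add_cancel_of_le hile]

lemma mem_I_iff (μ ν : Fin N →₀ ℕ) (f : MvPolynomial (Fin N) k) :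
    f ∈ (lowIdeal k N e) ^ (r+1) +
        Ideal.span {(MvPolynomial.monomial μ 1 : MvPolynomial (Fin N) k) *
          MvPolynomial.monomial ν 1} ↔
    ∀ m ∈ f.support, (r + 1 ≤ (fl e m).degree ∨ μ + ν ≤ m) := by
  classical
  have hI : (lowIdeal k N e) ^ (r+1) +
      Ideal.span {(MvPolynomial.monomial μ 1 : MvPolynomial (Fin N) k) *
        MvPolynomial.monomial ν 1} =
      Ideal.span ((fun s => MvPolynomial.monomial s (1:k)) ''
        ({s : Fin N →₀ ℕ | s.degree = r+1 ∧ ∀ i ∈ s.support, (i:ℕ) < e} ∪ {μ + ν})) := by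
    rw [Set.image_union, Ideal.span_union, lowpow_eq_span]
    congr 1
    rw [Set.image_singleton]
    congr 1
    rw [MvPolynomial.monomial_mul, mul_one]
  rw [hI, MvPolynomial.mem_ideal_span_monomial_image]
  apply forall_congr'; intro m
  apply imp_congr_right; intro _
  constructor
  · rintro ⟨s, hs, hsm⟩
    rcases hs with ⟨hs1, hs2⟩ | hs
    · left
      calc r + 1 = s.degree := hs1.symm
        _ ≤ (fl e m).degree := degree_mono (le_fl hs2 hsm)
    · right; rw [Set.mem_singleton_iff] at hs; subst hs; exact hsm
  · rintro (h | h)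
    · obtain ⟨s, hsle, hsd⟩ := exists_le_degree (w := fl e m) h
      refine ⟨s, Or.inl ⟨hsd, ?_⟩, le_trans hsle (fl_le m)⟩
      intro i hi
      have h1 := hsle i
      have h2 := Finsupp.mem_support_iff.1 hi
      apply fl_support (e := e) m
      rw [Finsupp.mem_support_iff]
      omega
    · exact ⟨μ + ν, Or.inr rfl, h⟩

end IdealLemmas

section Hilb

variable {k : Type} [Field k] {N : ℕ}

lemma finrank_restrictSupport {s : Set (Fin N →₀ ℕ)} (hs : s.Finite) :
    Module.finrank k (MvPolynomial.restrictSupport k s) = s.ncard := by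
  haveI := hs.fintype
  rw [Module.finrank_eq_card_basis (MvPolynomial.basisRestrictSupport k s)]
  rw [← Nat.card_coe_set_eq, Nat.card_eq_fintype_card]

lemma restrictSupport_inf (A B : Set (Fin N →₀ ℕ)) :
    (MvPolynomial.restrictSupport k A ⊓ MvPolynomial.restrictSupport k B :
      Submodule k (MvPolynomial (Fin N) k)) = MvPolynomial.restrictSupport k (A ∩ B) := by
  ext f
  rw [Submodule.mem_inf]
  constructor
  · rintro ⟨h1, h2⟩ x hx
    exact ⟨h1 hx, h2 hx⟩
  · intro h
    exact ⟨fun x hx => (h hx).1, fun x hx => (h hx).2⟩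

lemma hilb_eq_ncard (I : Ideal (MvPolynomial (Fin N) k)) (D : Set (Fin N →₀ ℕ))
    (hmem : ∀ f : MvPolynomial (Fin N) k, f ∈ I ↔ ∀ m ∈ f.support, m ∈ D) (t : ℕ) :
    hilb I t = {m : Fin N →₀ ℕ | m.degree = t ∧ m ∉ D}.ncard := by
  classical
  have hfin : {d : Fin N →₀ ℕ | d.degree = t}.Finite := by
    apply Set.Finite.subset (Finsupp.finite_of_degree_le t)
    intro x hx; simp only [Set.mem_setOf_eq] at hx ⊢; omega
  have h1 : MvPolynomial.homogeneousSubmodule (Fin N) k t =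
      MvPolynomial.restrictSupport k {d : Fin N →₀ ℕ | d.degree = t} :=
    MvPolynomial.homogeneousSubmodule_eq_finsupp_supported (Fin N) k t
  have h2 : Submodule.restrictScalars k
        (I : Submodule (MvPolynomial (Fin N) k) (MvPolynomial (Fin N) k)) =
      MvPolynomial.restrictSupport k D := by
    ext f
    rw [Submodule.restrictScalars_mem]
    rw [hmem f]
    constructor
    · intro h m hm; exact h m hm
    · intro h m hm; exact h hm
  unfold hilb
  rw [h1, h2, restrictSupport_inf, finrank_restrictSupport hfin,
    finrank_restrictSupport (hfin.subset (Set.inter_subset_right))]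
  rw [← Set.ncard_diff (Set.inter_subset_right (s := D))
    (hfin.subset (Set.inter_subset_right))]
  congr 1
  ext m
  simp only [Set.mem_diff, Set.mem_inter_iff, Set.mem_setOf_eq]
  tauto

end Hilb

section MainCount

variable {N e r dv : ℕ}

lemma count_A {t : ℕ} (hrt : r ≤ t) :
    {m : Fin N →₀ ℕ | m.degree = t ∧ (fl e m).degree ≤ r}.ncard =
      ∑ w ∈ (Wset_finite (N := N) (e := e) (r := r)).toFinset,
        (Hset e (t - w.degree) : Set (Fin N →₀ ℕ)).ncard := by
  classical
  haveI : Fintype (Wset e r : Set (Fin N →₀ ℕ)) := Wset_finite.fintype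
  haveI : ∀ w : (Wset e r : Set (Fin N →₀ ℕ)),
      Fintype (Hset e (t - w.1.degree) : Set (Fin N →₀ ℕ)) :=
    fun w => (Hset_finite _).fintype
  have eqv : {m : Fin N →₀ ℕ | m.degree = t ∧ (fl e m).degree ≤ r} ≃
      (Σ w : (Wset e r : Set (Fin N →₀ ℕ)), (Hset e (t - w.1.degree) : Set (Fin N →₀ ℕ))) :=
    { toFun := fun m =>
        ⟨⟨fl e m.1, m.2.2, fl_support m.1⟩,
         ⟨fh e m.1, by
            refine ⟨?_, fh_support m.1⟩
            have hsum : (fl e m.1).degree + (fh e m.1).degree = t := by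
              rw [← degree_add, fl_add_fh]; exact m.2.1
            show (fh e m.1).degree = t - (fl e m.1).degree
            omega⟩⟩
      invFun := fun x => ⟨x.1.1 + x.2.1, by
        constructor
        · rw [degree_add, x.2.2.1]
          have h1 : x.1.1.degree ≤ r := x.1.2.1
          omega
        · rw [fl_add, fl_of_low x.1.2.2, fl_of_high x.2.2.2, add_zero]
          exact x.1.2.1⟩
      left_inv := fun m => Subtype.ext (fl_add_fh m.1)
      right_inv := fun x => by
        rcases x with ⟨⟨w, hw⟩, ⟨h, hh⟩⟩
        have hwl : fl e (w + h) = w := by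
          rw [fl_add, fl_of_low hw.2, fl_of_high hh.2, add_zero]
        have hhh : fh e (w + h) = h := by
          rw [fh_add, fh_of_low hw.2, fh_of_high hh.2, zero_add]
        apply Sigma.ext
        · exact Subtype.ext hwl
        · apply (Subtype.heq_iff_coe_eq ?_).2
          · exact hhh
          · intro x
            show x ∈ Hset e (t - (fl e (w + h)).degree) ↔ x ∈ Hset e (t - w.degree)
            rw [hwl] }
  rw [← Nat.card_coe_set_eq, Nat.card_congr eqv, nat_card_sigma]
  have step : ∑ i : (Wset e r : Set (Fin N →₀ ℕ)),
      Nat.card (Hset e (t - i.1.degree) : Set (Fin N →₀ ℕ)) =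
      ∑ w ∈ (Wset_finite (N := N) (e := e) (r := r)).toFinset,
        Nat.card (Hset e (t - w.degree) : Set (Fin N →₀ ℕ)) := by
    rw [← Finset.sum_coe_sort ((Wset_finite (N := N) (e := e) (r := r)).toFinset)
      (fun w => Nat.card (Hset e (t - w.degree) : Set (Fin N →₀ ℕ)))]
    exact Fintype.sum_equiv
      (Equiv.subtypeEquivRight (fun x => (Set.Finite.mem_toFinset _).symm))
      _ _ (fun i => rfl)
  rw [step]
  apply Finset.sum_congr rfl
  intro w _
  rw [Nat.card_coe_set_eq]

lemma count_B (μ ν : Fin N →₀ ℕ)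
    (hμd : μ.degree = r) (hμs : ∀ i ∈ μ.support, (i:ℕ) < e)
    (hνd : ν.degree = dv) (hνs : ∀ i ∈ ν.support, e ≤ (i:ℕ))
    {t : ℕ} (ht : r + dv ≤ t) :
    {m : Fin N →₀ ℕ | m.degree = t ∧ (fl e m).degree ≤ r ∧ μ + ν ≤ m}.ncard =
      (Hset e (t - (r + dv)) : Set (Fin N →₀ ℕ)).ncard := by
  classical
  have himg : {m : Fin N →₀ ℕ | m.degree = t ∧ (fl e m).degree ≤ r ∧ μ + ν ≤ m} =
      (fun h => μ + ν + h) '' (Hset e (t - (r + dv))) := by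
    ext m
    simp only [Set.mem_setOf_eq, Set.mem_image]
    constructor
    · rintro ⟨hdt, hlr, hle⟩
      refine ⟨m - (μ + ν), ⟨?_, ?_⟩, ?_⟩
      · have h1 : (μ + ν) + (m - (μ + ν)) = m := add_tsub_cancel_of_le hle
        have h2 := congrArg Finsupp.degree h1
        rw [degree_add, degree_add, hμd, hνd] at h2
        omega
      · intro i hi
        rw [Finsupp.mem_support_iff, Finsupp.tsub_apply] at hi
        by_contra hie
        push_neg at hie
        have hμfl : μ = fl e m := by
          apply eq_of_le_of_degree_le
          · exact le_fl hμs (le_trans le_self_add hle)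
          · rw [hμd]; exact hlr
        have hmi : m i = μ i := by
          conv_lhs => rw [← fl_add_fh (e := e) m]
          rw [Finsupp.add_apply, ← hμfl]
          have : fh e m i = 0 := by
            by_contra h0
            have := fh_support (e := e) m i (Finsupp.mem_support_iff.2 h0)
            omega
          omega
        have hνi : ν i = 0 := by
          by_contra h0
          have := hνs i (Finsupp.mem_support_iff.2 h0)
          omega
        rw [Finsupp.add_apply, hmi, hνi] at hi
        omega
      · exact add_tsub_cancel_of_le hle
    · rintro ⟨h, ⟨hhd, hhs⟩, rfl⟩
      refine ⟨?_, ?_, le_add_right le_rfl⟩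
      · rw [degree_add, degree_add, hμd, hνd, hhd]; omega
      · rw [fl_add, fl_add, fl_of_low hμs, fl_of_high hνs, fl_of_high hhs, add_zero, add_zero,
          hμd]
  rw [himg, Set.ncard_image_of_injective _ (add_right_injective _)]

lemma count_main (μ ν : Fin N →₀ ℕ)
    (hμd : μ.degree = r) (hμs : ∀ i ∈ μ.support, (i:ℕ) < e)
    (hνd : ν.degree = dv) (hνs : ∀ i ∈ ν.support, e ≤ (i:ℕ))
    {t : ℕ} (ht : r + dv ≤ t) :
    {m : Fin N →₀ ℕ | m.degree = t ∧ ¬(r + 1 ≤ (fl e m).degree ∨ μ + ν ≤ m)}.ncard =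
      (∑ w ∈ (Wset_finite (N := N) (e := e) (r := r)).toFinset,
        (Hset e (t - w.degree) : Set (Fin N →₀ ℕ)).ncard) -
      (Hset e (t - (r + dv)) : Set (Fin N →₀ ℕ)).ncard ∧
    (Hset e (t - (r + dv)) : Set (Fin N →₀ ℕ)).ncard ≤
      ∑ w ∈ (Wset_finite (N := N) (e := e) (r := r)).toFinset,
        (Hset e (t - w.degree) : Set (Fin N →₀ ℕ)).ncard := by
  classical
  set A := {m : Fin N →₀ ℕ | m.degree = t ∧ (fl e m).degree ≤ r} with hA
  set B := {m : Fin N →₀ ℕ | m.degree = t ∧ (fl e m).degree ≤ r ∧ μ + ν ≤ m} with hB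
  have hBA : B ⊆ A := fun m hm => ⟨hm.1, hm.2.1⟩
  have hAfin : A.Finite :=
    (Finsupp.finite_of_degree_le t).subset (fun x hx => le_of_eq hx.1)
  have hdiff : {m : Fin N →₀ ℕ | m.degree = t ∧ ¬(r + 1 ≤ (fl e m).degree ∨ μ + ν ≤ m)} =
      A \ B := by
    ext m
    simp only [hA, hB, Set.mem_diff, Set.mem_setOf_eq, not_or]
    constructor
    · rintro ⟨h1, h2, h3⟩
      exact ⟨⟨h1, by omega⟩, fun hc => h3 hc.2.2⟩
    · rintro ⟨⟨h1, h2⟩, h3⟩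
      refine ⟨h1, by omega, fun hc => h3 ⟨h1, h2, hc⟩⟩
  rw [hdiff, Set.ncard_diff hBA (hAfin.subset hBA)]
  rw [count_A (e := e) (by omega), count_B μ ν hμd hμs hνd hνs ht]
  refine ⟨rfl, ?_⟩
  rw [← count_A (e := e) (by omega), ← count_B μ ν hμd hμs hνd hνs ht]
  exact Set.ncard_le_ncard hBA hAfin

end MainCount

section Poly

open Polynomial

lemma choose_mul_factorial_eq_prod (n d : ℕ) :
    (n + d).choose d * n.factorial = ∏ i ∈ Finset.range n, (d + 1 + i) := by
  induction n with
  | zero => simp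
  | succ n ih =>
    rw [Finset.prod_range_succ, ← ih]
    have key : (n + 1 + d).choose d * (n + 1) = (n + d).choose d * (n + d + 1) := by
      have h1 := Nat.add_one_mul_choose_eq (n + d) n
      have h2 : (n + d).choose n = (n + d).choose d := Nat.choose_symm_add
      have h3 : (n + d + 1).choose (n + 1) = (n + 1 + d).choose d := by
        rw [show n + d + 1 = (n + 1) + d by omega]
        exact Nat.choose_symm_add
      rw [h2, h3] at h1
      linarith
    rw [Nat.factorial_succ]
    calc (n + 1 + d).choose d * ((n + 1) * n.factorial)
        = ((n + 1 + d).choose d * (n + 1)) * n.factorial := by ring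
      _ = ((n + d).choose d * (n + d + 1)) * n.factorial := by rw [key]
      _ = (n + d).choose d * n.factorial * (d + 1 + n) := by ring

/-- shifted product polynomial -/
noncomputable def sp (n c : ℕ) : Polynomial ℚ :=
  ∏ i ∈ Finset.range n, (Polynomial.X + Polynomial.C ((1:ℚ) + i - c))

lemma sp_monic (n c : ℕ) : (sp n c).Monic :=
  monic_prod_of_monic _ _ fun i _ => monic_X_add_C _

lemma sp_natDegree (n c : ℕ) : (sp n c).natDegree = n := by
  rw [sp, natDegree_prod_of_monic _ _ (fun i _ => monic_X_add_C _),
    Finset.sum_congr rfl (fun i _ => natDegree_X_add_C _), Finset.sum_const,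
    Finset.card_range, smul_eq_mul, mul_one]

lemma sp_coeff (n c : ℕ) : (sp n c).coeff n = 1 := by
  have := (sp_monic n c).leadingCoeff
  rwa [leadingCoeff, sp_natDegree] at this

lemma sp_eval {n c t : ℕ} (hct : c ≤ t) :
    (sp n c).eval (t : ℚ) = ((n + (t - c)).choose (t - c) : ℚ) * n.factorial := by
  rw [sp, Polynomial.eval_prod]
  have hterm : ∀ i ∈ Finset.range n, ((Polynomial.X : ℚ[X]) + Polynomial.C ((1:ℚ) + i - c)).eval (t : ℚ) =
      (((t - c) + 1 + i : ℕ) : ℚ) := by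
    intro i _
    rw [Polynomial.eval_add, Polynomial.eval_X, Polynomial.eval_C]
    push_cast [Nat.cast_sub hct]
    ring
  rw [Finset.prod_congr rfl hterm, ← Nat.cast_prod, ← choose_mul_factorial_eq_prod]
  push_cast
  ring

end Poly

end S2Aux

/-- `deg (S/(J^{r+1}+(uv))) = binom(e+r, e) - 1`. -/
theorem statement2 {k : Type} [Field k] (n e r : ℕ) (he : 1 ≤ e) (hr : 1 ≤ r)
    (u v : MvPolynomial (Fin (n + e + 1)) k)
    (hu : IsMonomialSupp u (fun i => (i : ℕ) < e) r)
    (hv : ∃ dv : ℕ, 1 ≤ dv ∧ IsMonomialSupp v (fun i => e ≤ (i : ℕ)) dv) :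
    HasDegree ((lowIdeal k (n + e + 1) e) ^ (r + 1) + Ideal.span {u * v}) (n + 1)
      (Nat.choose (e + r) e - 1) := by
  classical
  obtain ⟨dv, hdv1, ν, hv1, hv2, hv3⟩ := hv
  obtain ⟨μ, hu1, hu2, hu3⟩ := hu
  have hμd : μ.degree = r := hu3
  have hνd : ν.degree = dv := hv3
  have hμs : ∀ i ∈ μ.support, (i:ℕ) < e := fun i hi => hu2 i (Finsupp.mem_support_iff.1 hi)
  have hνs : ∀ i ∈ ν.support, e ≤ (i:ℕ) := fun i hi => hv2 i (Finsupp.mem_support_iff.1 hi)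
  subst hu1; subst hv1
  set I := (lowIdeal k (n+e+1) e) ^ (r+1) +
    Ideal.span {(MvPolynomial.monomial μ 1 : MvPolynomial (Fin (n+e+1)) k) *
      MvPolynomial.monomial ν 1} with hI
  set Wfin := (S2Aux.Wset_finite (N := n+e+1) (e := e) (r := r)).toFinset with hWfin
  have hWcard : Wfin.card = (e + r).choose e := by
    rw [hWfin, ← Set.ncard_eq_toFinset_card _ (S2Aux.Wset_finite (N := n+e+1) (e := e) (r := r))]
    exact S2Aux.card_Wset he (by omega)
  have hchoose2 : 2 ≤ (e + r).choose e := by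
    have h1 : (e+1).choose e ≤ (e+r).choose e := Nat.choose_le_choose e (by omega)
    rw [Nat.choose_succ_self_right] at h1
    omega
  have hW2 : 2 ≤ Wfin.card := by rw [hWcard]; exact hchoose2
  have hfac : (n.factorial : ℚ) ≠ 0 := by exact_mod_cast Nat.factorial_ne_zero n
  set P0 : Polynomial ℚ := (∑ w ∈ Wfin, S2Aux.sp n w.degree) - S2Aux.sp n (r + dv) with hP0
  set p : Polynomial ℚ := Polynomial.C ((n.factorial : ℚ))⁻¹ * P0 with hp
  have hcoeff : P0.coeff n = (Wfin.card : ℚ) - 1 := by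
    rw [hP0, Polynomial.coeff_sub, Polynomial.finset_sum_coeff,
      Finset.sum_congr rfl (fun w _ => S2Aux.sp_coeff n w.degree), S2Aux.sp_coeff,
      Finset.sum_const, nsmul_eq_mul, mul_one]
  have hcne : P0.coeff n ≠ 0 := by
    rw [hcoeff]
    have h2 : (2:ℚ) ≤ (Wfin.card : ℚ) := by exact_mod_cast hW2
    intro hcontra
    linarith
  have hdegle : P0.natDegree ≤ n := by
    apply le_trans (Polynomial.natDegree_sub_le _ _)
    apply max_le
    · exact Polynomial.natDegree_sum_le_of_forall_le _ _
        (fun w _ => le_of_eq (S2Aux.sp_natDegree n w.degree))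
    · exact le_of_eq (S2Aux.sp_natDegree n _)
  have hP0deg : P0.natDegree = n := Polynomial.natDegree_eq_of_le_of_coeff_ne_zero hdegle hcne
  have hP0lead : P0.leadingCoeff = (Wfin.card : ℚ) - 1 := by
    rw [Polynomial.leadingCoeff, hP0deg, hcoeff]
  have hpdeg : p.natDegree = n := by
    rw [hp, Polynomial.natDegree_C_mul (inv_ne_zero hfac), hP0deg]
  have hplead : p.leadingCoeff = (n.factorial : ℚ)⁻¹ * ((Wfin.card : ℚ) - 1) := by
    rw [hp, Polynomial.leadingCoeff_mul, Polynomial.leadingCoeff_C, hP0lead]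
  refine ⟨p, ?_, ?_, ?_⟩
  · rw [hpdeg]; omega
  · have hn1 : n + 1 - 1 = n := by omega
    rw [hn1, hplead, hWcard]
    have hcast : (((e + r).choose e - 1 : ℕ) : ℚ) = ((e + r).choose e : ℚ) - 1 := by
      push_cast [Nat.cast_sub (by omega : 1 ≤ (e + r).choose e)]
      ring
    rw [hcast]
    field_simp
  · rw [Filter.eventually_atTop]
    refine ⟨r + dv, fun t ht => ?_⟩
    have hmem : ∀ f : MvPolynomial (Fin (n+e+1)) k, f ∈ I ↔ ∀ m ∈ f.support,
        m ∈ {m : Fin (n+e+1) →₀ ℕ | r + 1 ≤ (S2Aux.fl e m).degree ∨ μ + ν ≤ m} :=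
      fun f => S2Aux.mem_I_iff μ ν f
    have h1 := S2Aux.hilb_eq_ncard I _ hmem t
    obtain ⟨h2, h3⟩ := S2Aux.count_main (e := e) μ ν hμd hμs hνd hνs ht
    have hset_eq : {m : Fin (n+e+1) →₀ ℕ | m.degree = t ∧
        m ∉ {m : Fin (n+e+1) →₀ ℕ | r + 1 ≤ (S2Aux.fl e m).degree ∨ μ + ν ≤ m}} =
        {m : Fin (n+e+1) →₀ ℕ | m.degree = t ∧
          ¬(r + 1 ≤ (S2Aux.fl e m).degree ∨ μ + ν ≤ m)} := rfl
    rw [hset_eq, h2] at h1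
    -- cast hilb to ℚ
    have hcast1 : (hilb I t : ℚ) =
        (∑ w ∈ Wfin, ((n + (t - w.degree)).choose (t - w.degree) : ℚ)) -
        ((n + (t - (r + dv))).choose (t - (r + dv)) : ℚ) := by
      rw [h1, Nat.cast_sub h3]
      congr 1
      · rw [Nat.cast_sum]
        apply Finset.sum_congr rfl
        intro w _
        rw [S2Aux.card_Hset]
      · rw [S2Aux.card_Hset]
    rw [hcast1]
    -- evaluate p
    rw [hp, Polynomial.eval_mul, Polynomial.eval_C, hP0, Polynomial.eval_sub,
      Polynomial.eval_finset_sum]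
    have hev : ∀ w ∈ Wfin, (S2Aux.sp n w.degree).eval (t:ℚ) =
        ((n + (t - w.degree)).choose (t - w.degree) : ℚ) * n.factorial := by
      intro w hw
      apply S2Aux.sp_eval
      have hwW : w ∈ S2Aux.Wset e r := (Set.Finite.mem_toFinset _).1 hw
      have := hwW.1
      omega
    rw [Finset.sum_congr rfl hev, S2Aux.sp_eval (by omega : r + dv ≤ t)]
    rw [← Finset.sum_mul]
    field_simp
end

section
/- Let $S_0 = k[x_0,\dots,x_{n+e}]$, $J = (x_0,\dots,x_{e-1})$, $u$ a monomial of degree $r$ in $x_0,\dots,x_{e-1}$, and $v$ a monomial of positive degree in $x_e,\dots,x_{n+e}$. Then $\operatorname{depth}(S_0/(J^{r+1}+(uv))) \geq n$. -/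
open MvPolynomial Filter

open scoped Pointwise

namespace St3
variable {k : Type} [Field k] {N : ℕ}

def lowDeg (e : ℕ) (a : Fin N →₀ ℕ) : ℕ := ∑ l : Fin N, if (l : ℕ) < e then a l else 0

lemma lowDeg_add (e : ℕ) (a b : Fin N →₀ ℕ) : lowDeg e (a + b) = lowDeg e a + lowDeg e b := by
  unfold lowDeg
  rw [← Finset.sum_add_distrib]
  refine Finset.sum_congr rfl fun l _ => ?_
  split <;> simp

lemma lowDeg_single (e : ℕ) (i : Fin N) (hi : (i : ℕ) < e) (c : ℕ) :
    lowDeg e (Finsupp.single i c) = c := by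
  unfold lowDeg
  rw [Finset.sum_eq_single i]
  · simp [hi]
  · intro l _ hl
    split
    · simp [Finsupp.single_apply, Ne.symm hl]
    · rfl
  · simp

lemma lowDeg_eq_zero (e : ℕ) (m : Fin N →₀ ℕ) (hm : ∀ l, m l ≠ 0 → e ≤ (l : ℕ)) :
    lowDeg e m = 0 := by
  refine Finset.sum_eq_zero fun l _ => ?_
  split
  · rename_i h
    by_contra hc
    exact absurd (hm l hc) (by omega)
  · rfl

lemma mem_lowIdeal_support (e : ℕ) (f : MvPolynomial (Fin N) k) (hf : f ∈ lowIdeal k N e) :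
    ∀ a ∈ f.support, 1 ≤ lowDeg e a := by
  refine Submodule.span_induction ?_ ?_ ?_ ?_ hf
  · rintro x ⟨i, hie, rfl⟩ a ha
    rw [support_X] at ha
    simp only [Finset.mem_singleton] at ha
    subst ha
    rw [lowDeg_single e i hie]
  · simp
  · intro x y _ _ hx hy a ha
    have := Finsupp.support_add ha
    rw [Finset.mem_union] at this
    rcases this with h | h
    · exact hx a h
    · exact hy a h
  · intro r x _ hx a ha
    have := MvPolynomial.support_mul r x ha
    rw [Finset.mem_add] at this
    obtain ⟨b, _, c, hc, rfl⟩ := this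
    calc 1 ≤ lowDeg e c := hx c hc
    _ ≤ lowDeg e b + lowDeg e c := le_add_self
    _ = lowDeg e (b + c) := (lowDeg_add e b c).symm

lemma mem_pow_lowIdeal_imp (e s : ℕ) (f : MvPolynomial (Fin N) k)
    (hf : f ∈ lowIdeal k N e ^ s) : ∀ a ∈ f.support, s ≤ lowDeg e a := by
  induction s generalizing f with
  | zero => simp
  | succ s ih =>
    rw [pow_succ] at hf
    refine Submodule.mul_induction_on hf ?_ ?_
    · intro m hm n hn a ha
      have := MvPolynomial.support_mul m n ha
      rw [Finset.mem_add] at this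
      obtain ⟨b, hb, c, hc, rfl⟩ := this
      rw [lowDeg_add]
      have h1 := ih m hm b hb
      have h2 := mem_lowIdeal_support e n hn c hc
      omega
    · intro x y hx hy a ha
      have := Finsupp.support_add ha
      rw [Finset.mem_union] at this
      rcases this with h | h
      · exact hx a h
      · exact hy a h

lemma monomial_mem_pow_lowIdeal (e s : ℕ) (a : Fin N →₀ ℕ) (c : k) (h : s ≤ lowDeg e a) :
    monomial a c ∈ lowIdeal k N e ^ s := by
  induction s generalizing a with
  | zero => simp
  | succ s ih =>
    have h1 : 1 ≤ lowDeg e a := by omega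
    have : ∃ i : Fin N, (i : ℕ) < e ∧ a i ≠ 0 := by
      by_contra hc
      push_neg at hc
      have : lowDeg e a = 0 := by
        refine Finset.sum_eq_zero fun l _ => ?_
        split
        · exact hc l ‹_›
        · rfl
      omega
    obtain ⟨i, hie, hai⟩ := this
    have hdecomp : Finsupp.single i 1 + (a - Finsupp.single i 1) = a := by
      ext l
      by_cases hl : l = i
      · subst hl
        simp only [Finsupp.add_apply, Finsupp.single_eq_same, Finsupp.tsub_apply]
        omega
      · simp [Finsupp.single_apply, Ne.symm hl]
    have hrest : s ≤ lowDeg e (a - Finsupp.single i 1) := by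
      have := lowDeg_add e (Finsupp.single i 1) (a - Finsupp.single i 1)
      rw [hdecomp, lowDeg_single e i hie] at this
      omega
    have heq : monomial a c = X i * monomial (a - Finsupp.single i 1) c := by
      rw [X, monomial_mul, one_mul, hdecomp]
    rw [heq, pow_succ']
    exact Ideal.mul_mem_mul (Ideal.subset_span ⟨i, hie, rfl⟩) (ih _ hrest)

lemma mem_pow_lowIdeal_iff (e s : ℕ) (f : MvPolynomial (Fin N) k) :
    f ∈ lowIdeal k N e ^ s ↔ ∀ a ∈ f.support, s ≤ lowDeg e a := by
  refine ⟨mem_pow_lowIdeal_imp e s f, fun h => ?_⟩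
  rw [f.as_sum]
  exact Submodule.sum_mem _ fun a ha => monomial_mem_pow_lowIdeal e s a _ (h a ha)



lemma colon_monomial (e s : ℕ) (m : Fin N →₀ ℕ) (hm : ∀ l, m l ≠ 0 → e ≤ (l : ℕ))
    (h : MvPolynomial (Fin N) k) (hh : h * monomial m 1 ∈ lowIdeal k N e ^ s) :
    h ∈ lowIdeal k N e ^ s := by
  rw [mem_pow_lowIdeal_iff] at hh ⊢
  intro a ha
  have hcoeff : (h * monomial m 1).coeff (a + m) = h.coeff a := by
    rw [coeff_mul_monomial, mul_one]
  have hmem : a + m ∈ (h * monomial m 1).support := by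
    rw [mem_support_iff, hcoeff]
    exact mem_support_iff.mp ha
  have := hh _ hmem
  rw [lowDeg_add, lowDeg_eq_zero e m hm] at this
  omega

lemma aeval_mem_pow_lowIdeal (e s : ℕ) (σ : Fin N → MvPolynomial (Fin N) k)
    (hσ : ∀ i : Fin N, (i : ℕ) < e → σ i = X i) (f : MvPolynomial (Fin N) k)
    (hf : f ∈ lowIdeal k N e ^ s) : aeval σ f ∈ lowIdeal k N e ^ s := by
  have hmap : Ideal.map (aeval σ : MvPolynomial (Fin N) k →ₐ[k] MvPolynomial (Fin N) k)
      (lowIdeal k N e) ≤ lowIdeal k N e := by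
    rw [lowIdeal, Ideal.map_span, Ideal.span_le]
    rintro x ⟨y, ⟨i, hie, rfl⟩, rfl⟩
    simp only [aeval_X, hσ i hie]
    exact Ideal.subset_span ⟨i, hie, rfl⟩
  have h1 : aeval σ f ∈ Ideal.map (aeval σ : MvPolynomial (Fin N) k →ₐ[k] MvPolynomial (Fin N) k)
      (lowIdeal k N e ^ s) := Ideal.mem_map_of_mem _ hf
  rw [Ideal.map_pow] at h1
  exact Ideal.pow_right_mono hmap s h1

lemma aeval_monomial_fix (σ : Fin N → MvPolynomial (Fin N) k) (m : Fin N →₀ ℕ)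
    (hm : ∀ l, m l ≠ 0 → σ l = X l) : aeval σ (monomial m (1 : k)) = monomial m 1 := by
  rw [aeval_monomial, monomial_eq, C_1, one_mul, map_one, one_mul]
  refine Finsupp.prod_congr fun l hl => ?_
  rw [hm l (Finsupp.mem_support_iff.mp hl)]

lemma aeval_rename_monomial (τ : Fin N → Fin N) (m : Fin N →₀ ℕ) :
    aeval (fun l => X (τ l)) (monomial m (1 : k)) = monomial (m.mapDomain τ) (1 : k) := by
  have h1 : rename τ (monomial m (1:k)) = monomial (m.mapDomain τ) 1 := rename_monomial τ m 1
  have h2 : rename τ (monomial m (1:k)) = aeval (fun l => X (τ l)) (monomial m (1:k)) := by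
    rw [rename_eq_aeval]
    rfl
  rw [← h2, h1]

lemma sub_aeval_mem_span (σ : Fin N → MvPolynomial (Fin N) k) (g : MvPolynomial (Fin N) k) :
    g - aeval σ g ∈ Ideal.span (Set.range fun l => X l - σ l) := by
  induction g using MvPolynomial.induction_on with
  | C a => simp [aeval_C, algebraMap_eq]
  | add p q hp hq =>
    rw [map_add]
    have : p + q - (aeval σ p + aeval σ q) = (p - aeval σ p) + (q - aeval σ q) := by ring
    rw [this]
    exact Ideal.add_mem _ hp hq
  | mul_X p i hp =>
    rw [map_mul, aeval_X]
    have : p * X i - aeval σ p * σ i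
        = (p - aeval σ p) * X i + aeval σ p * (X i - σ i) := by ring
    rw [this]
    exact Ideal.add_mem _ (Ideal.mul_mem_right _ _ hp)
      (Ideal.mul_mem_left _ _ (Ideal.subset_span ⟨i, rfl⟩))

lemma diff_colon (e s : ℕ) (i j : Fin N) (hi : e ≤ (i : ℕ)) (hj : e ≤ (j : ℕ)) (hij : i ≠ j)
    (z : MvPolynomial (Fin N) k) (hz : (X i - X j) * z ∈ lowIdeal k N e ^ s) :
    z ∈ lowIdeal k N e ^ s := by
  set ψ : Fin N → MvPolynomial (Fin N) k := Function.update X i (X i + X j) with hψ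
  set φ : Fin N → MvPolynomial (Fin N) k := Function.update X i (X i - X j) with hφ
  have hψlow : ∀ l : Fin N, (l : ℕ) < e → ψ l = X l := by
    intro l hl
    exact Function.update_of_ne (by intro h; subst h; omega) _ _
  have hφlow : ∀ l : Fin N, (l : ℕ) < e → φ l = X l := by
    intro l hl
    exact Function.update_of_ne (by intro h; subst h; omega) _ _
  have hφψ : ∀ w : MvPolynomial (Fin N) k, aeval φ (aeval ψ w) = w := by
    intro w
    have hcomp : (aeval φ).comp (aeval ψ) = AlgHom.id k (MvPolynomial (Fin N) k) := by
      refine MvPolynomial.algHom_ext fun l => ?_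
      by_cases hl : l = i
      · subst hl
        simp only [AlgHom.comp_apply, aeval_X, AlgHom.id_apply]
        rw [hψ, Function.update_self, map_add, aeval_X, aeval_X,
          hφ, Function.update_self, Function.update_of_ne (Ne.symm hij)]
        ring
      · simp only [AlgHom.comp_apply, aeval_X, AlgHom.id_apply]
        rw [hψ, Function.update_of_ne hl, aeval_X, hφ, Function.update_of_ne hl]
    calc aeval φ (aeval ψ w) = ((aeval φ).comp (aeval ψ)) w := rfl
    _ = w := by rw [hcomp]; rfl
  have h1 : aeval ψ ((X i - X j) * z) ∈ lowIdeal k N e ^ s :=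
    aeval_mem_pow_lowIdeal e s ψ hψlow _ hz
  have h2 : aeval ψ ((X i - X j) * z) = X i * aeval ψ z := by
    rw [map_mul, map_sub, aeval_X, aeval_X, hψ, Function.update_self,
      Function.update_of_ne (Ne.symm hij)]
    ring
  rw [h2] at h1
  have h3 : aeval ψ z ∈ lowIdeal k N e ^ s := by
    refine colon_monomial e s (Finsupp.single i 1) ?_ _ ?_
    · intro l hl
      have : l = i := by
        by_contra hc
        simp [Finsupp.single_apply, Ne.symm hc] at hl
      subst this
      exact hi
    · rw [mul_comm, ← X]
      exact h1
  have := aeval_mem_pow_lowIdeal e s φ hφlow _ h3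
  rwa [hφψ] at this


lemma span_range_le_span_diff (i : Fin N) (σ : Fin N → MvPolynomial (Fin N) k)
    (hσ : ∀ l, l ≠ i → σ l = X l) :
    Ideal.span (Set.range fun l => X l - σ l) ≤ Ideal.span {X i - σ i} := by
  rw [Ideal.span_le]
  rintro x ⟨l, rfl⟩
  show X l - σ l ∈ Ideal.span {X i - σ i}
  by_cases hl : l = i
  · subst hl
    exact Ideal.subset_span rfl
  · rw [hσ l hl, sub_self]
    exact Ideal.zero_mem _

lemma key_colon (e s : ℕ) (i j : Fin N) (hi : e ≤ (i : ℕ)) (hj : e ≤ (j : ℕ)) (hij : i ≠ j)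
    (mu mw : Fin N →₀ ℕ) (hmu : ∀ l, mu l ≠ 0 → (l : ℕ) < e) (hmw : ∀ l, mw l ≠ 0 → e ≤ (l : ℕ))
    (g : MvPolynomial (Fin N) k)
    (hg : (X i - X j) * g ∈
      lowIdeal k N e ^ s ⊔ Ideal.span {monomial mu (1 : k) * monomial mw 1}) :
    g ∈ lowIdeal k N e ^ s ⊔ Ideal.span {monomial mu (1 : k) * monomial mw 1} := by
  obtain ⟨q, hq, z, hz, heq⟩ := Submodule.mem_sup.mp hg
  obtain ⟨p, rfl⟩ := Ideal.mem_span_singleton'.mp hz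
  set τ : Fin N → Fin N := fun l => if l = i then j else l with hτ
  set ρ : Fin N → MvPolynomial (Fin N) k := fun l => X (τ l) with hρ
  have hρlow : ∀ l : Fin N, (l : ℕ) < e → ρ l = X l := by
    intro l hl
    have : l ≠ i := by intro h; subst h; omega
    simp [hρ, hτ, this]
  have hρi : ρ i = X j := by simp [hρ, hτ]
  have hρj : ρ j = X j := by
    by_cases hji : j = i
    · exact absurd hji.symm hij
    · simp [hρ, hτ, hji]
  -- apply aeval ρ to heq
  have h0 : aeval ρ ((X i - X j) * g) = 0 := by
    rw [map_mul, map_sub, aeval_X, aeval_X, hρi, hρj, sub_self, zero_mul]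
  have hu' : aeval ρ (monomial mu (1 : k)) = monomial mu 1 := by
    refine aeval_monomial_fix ρ mu fun l hl => ?_
    exact hρlow l (hmu l hl)
  have hw' : aeval ρ (monomial mw (1 : k)) = monomial (mw.mapDomain τ) (1 : k) := by
    rw [hρ]
    exact aeval_rename_monomial τ mw
  have hmw' : ∀ l, (mw.mapDomain τ) l ≠ 0 → e ≤ (l : ℕ) := by
    intro l hl
    have hls : l ∈ (mw.mapDomain τ).support := Finsupp.mem_support_iff.mpr hl
    have := Finsupp.mapDomain_support hls
    rw [Finset.mem_image] at this
    obtain ⟨l', hl', rfl⟩ := this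
    have hl'e : e ≤ (l' : ℕ) := hmw l' (Finsupp.mem_support_iff.mp hl')
    by_cases hc : l' = i
    · simp only [hτ, hc, if_pos rfl]
      exact hj
    · simp only [hτ, if_neg hc]
      exact hl'e
  have hq' : aeval ρ q ∈ lowIdeal k N e ^ s := aeval_mem_pow_lowIdeal e s ρ hρlow q hq
  have h3 : aeval ρ p * monomial mu 1 * monomial (mw.mapDomain τ) 1 ∈ lowIdeal k N e ^ s := by
    have hc := congrArg (aeval ρ) heq
    rw [h0, map_add, map_mul, map_mul, hu', hw'] at hc
    have : aeval ρ p * monomial mu 1 * monomial (mw.mapDomain τ) 1 = -aeval ρ q := by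
      linear_combination hc
    rw [this]
    exact neg_mem hq'
  have h4 : aeval ρ p * monomial mu 1 ∈ lowIdeal k N e ^ s :=
    colon_monomial e s (mw.mapDomain τ) hmw' _ h3
  -- p - aeval ρ p ∈ span {X i - X j}
  have h5 : p - aeval ρ p ∈ Ideal.span {X i - X j} := by
    have h5a := sub_aeval_mem_span ρ p
    have h5b : Ideal.span (Set.range fun l => X l - ρ l)
        ≤ Ideal.span {X i - (X j : MvPolynomial (Fin N) k)} := by
      have := span_range_le_span_diff (k := k) i ρ (fun l hl => by simp [hρ, hτ, hl])
      rwa [hρi] at this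
    exact h5b h5a
  obtain ⟨h, hh⟩ := Ideal.mem_span_singleton'.mp h5
  -- (X i - X j) * (g - h * (u*w)) ∈ J^s
  have h6 : (X i - X j) * (g - h * (monomial mu 1 * monomial mw 1))
      ∈ lowIdeal k N e ^ s := by
    have hcalc : (X i - X j) * (g - h * (monomial mu 1 * monomial mw 1))
        = q + (aeval ρ p * monomial mu 1) * monomial mw 1 := by
      linear_combination -heq - monomial mu (1:k) * monomial mw 1 * hh
    rw [hcalc]
    exact Ideal.add_mem _ hq (Ideal.mul_mem_right _ _ h4)
  have h7 := diff_colon e s i j hi hj hij _ h6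
  have h8 : g = (g - h * (monomial mu 1 * monomial mw 1))
      + h * (monomial mu 1 * monomial mw 1) := by ring
  rw [h8]
  exact Submodule.add_mem _ (Submodule.mem_sup_left h7)
    (Submodule.mem_sup_right (Ideal.mem_span_singleton'.mpr ⟨h, rfl⟩))

end St3
open RingTheory.Sequence


lemma smul_top_quot_eq_map {A : Type*} [CommRing A] (I J : Ideal A) :
    (J • ⊤ : Submodule A (A ⧸ I)) = Submodule.map I.mkQ J := by
  calc (J • ⊤ : Submodule A (A ⧸ I)) = J • Submodule.map I.mkQ ⊤ := by
        rw [Submodule.map_top, Submodule.range_mkQ]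
    _ = Submodule.map I.mkQ (J • ⊤) := (Submodule.map_smul'' J ⊤ I.mkQ).symm
    _ = Submodule.map I.mkQ J := by rw [Ideal.smul_eq_mul, Ideal.mul_top]

lemma isRegular_quot_of_colon {A : Type*} [CommRing A] (I : Ideal A) (rs : List A)
    (h1 : ∀ (t : ℕ) (ht : t < rs.length) (f : A),
      rs[t] * f ∈ I ⊔ Ideal.ofList (rs.take t) → f ∈ I ⊔ Ideal.ofList (rs.take t))
    (h2 : I ⊔ Ideal.ofList rs ≠ ⊤) :
    RingTheory.Sequence.IsRegular (A ⧸ I) rs := by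
  have key : ∀ (J : Ideal A),
      (J • ⊤ : Submodule A (A ⧸ I)) = Submodule.map I.mkQ J := smul_top_quot_eq_map I
  constructor
  · constructor
    intro t ht
    set J := Ideal.ofList (rs.take t) with hJ
    have e1 : ((A ⧸ I) ⧸ (J • ⊤ : Submodule A (A ⧸ I))) ≃ₗ[A] A ⧸ (I ⊔ J) :=
      (Submodule.quotEquivOfEq _ _ (key J)) ≪≫ₗ
        Submodule.quotientQuotientEquivQuotientSup I J
    rw [e1.isSMulRegular_congr]
    rw [isSMulRegular_quotient_iff_mem_of_smul_mem]
    intro x hx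
    exact h1 t ht x hx
  · intro hcontra
    apply h2
    rw [key] at hcontra
    have := congrArg (Submodule.comap I.mkQ) hcontra
    rw [Submodule.comap_top, Submodule.comap_map_eq, Submodule.ker_mkQ] at this
    rw [sup_comm]
    exact this.symm

/-- `depth (S/(J^{r+1}+(uv))) ≥ n`. -/
theorem statement3 {k : Type} [Field k] (n e r : ℕ) (he : 1 ≤ e)
    (u v : MvPolynomial (Fin (n + e + 1)) k)
    (hu : IsMonomialSupp u (fun i => (i : ℕ) < e) r)
    (hv : ∃ dv : ℕ, 1 ≤ dv ∧ IsMonomialSupp v (fun i => e ≤ (i : ℕ)) dv) :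
    HasDepthGE ((lowIdeal k (n + e + 1) e) ^ (r + 1) + Ideal.span {u * v}) n := by
  classical
  obtain ⟨mu, rfl, hmu, hmur⟩ := hu
  obtain ⟨dv, hdv, mv, rfl, hmv, hmvd⟩ := hv
  obtain ⟨j0, hj0v⟩ : ∃ j : Fin (n + e + 1), (j : ℕ) = e := ⟨⟨e, by omega⟩, rfl⟩
  set F : Fin n → MvPolynomial (Fin (n + e + 1)) k :=
    fun t => X (⟨e + 1 + (t : ℕ), by omega⟩ : Fin (n + e + 1)) - X j0 with hF
  set rs := List.ofFn F with hrs
  have hlen : rs.length = n := by simp [hrs]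
  have hmv0 : mv ≠ 0 := by
    intro hc
    rw [hc] at hmvd
    simp [Finsupp.sum] at hmvd
    omega
  have hrsget : ∀ (s : ℕ) (hs : s < rs.length),
      rs[s] = X (⟨e + 1 + s, by rw [hlen] at hs; omega⟩ : Fin (n + e + 1)) - X j0 := by
    intro s hs
    show (List.ofFn F)[s]'hs = _
    rw [List.getElem_ofFn]
  refine ⟨rs, hlen, ?_, ?_⟩
  · intro x hx
    rw [hrs, List.mem_ofFn] at hx
    obtain ⟨t, rfl⟩ := hx
    exact sub_mem (Ideal.subset_span ⟨_, rfl⟩) (Ideal.subset_span ⟨_, rfl⟩)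
  rw [Submodule.add_eq_sup]
  refine isRegular_quot_of_colon _ rs ?_ ?_
  · -- colon condition
    intro t ht f hf
    have htn : t < n := by rwa [hlen] at ht
    obtain ⟨it, hitv⟩ : ∃ i : Fin (n + e + 1), (i : ℕ) = e + 1 + t := ⟨⟨e + 1 + t, by omega⟩, rfl⟩
    have hget : rs[t] = X it - X j0 := by
      rw [hrsget t ht]
      have hfin : (⟨e + 1 + t, by omega⟩ : Fin (n + e + 1)) = it := by
        ext
        rw [hitv]
      rw [hfin]
    set τt : Fin (n + e + 1) → Fin (n + e + 1) :=
      fun l => if e + 1 ≤ (l : ℕ) ∧ (l : ℕ) < e + 1 + t then j0 else l with hτt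
    set σt : Fin (n + e + 1) → MvPolynomial (Fin (n + e + 1)) k :=
      fun l => X (τt l) with hσt
    have hτl : ∀ l : Fin (n + e + 1), ¬(e + 1 ≤ (l : ℕ) ∧ (l : ℕ) < e + 1 + t) → τt l = l := by
      intro l hl
      show (if _ then _ else _) = l
      rw [if_neg hl]
    have hτin : ∀ l : Fin (n + e + 1), (e + 1 ≤ (l : ℕ) ∧ (l : ℕ) < e + 1 + t) → τt l = j0 := by
      intro l hl
      show (if _ then _ else _) = j0
      rw [if_pos hl]
    have hσeq : ∀ l, σt l = X (τt l) := fun l => rfl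
    have hσlow : ∀ l : Fin (n + e + 1), (l : ℕ) < e → σt l = X l := by
      intro l hl
      rw [hσeq, hτl l (by omega)]
    have hσit : σt it = X it := by
      rw [hσeq, hτl it (by omega)]
    have hσj0 : σt j0 = X j0 := by
      rw [hσeq, hτl j0 (by omega)]
    have hτhigh : ∀ l : Fin (n + e + 1), e ≤ (l : ℕ) → e ≤ ((τt l) : ℕ) := by
      intro l hl
      by_cases hc : e + 1 ≤ (l : ℕ) ∧ (l : ℕ) < e + 1 + t
      · rw [hτin l hc, hj0v]
      · rw [hτl l hc]
        exact hl
    set Dt := Ideal.ofList (rs.take t) with hDtdef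
    set J := lowIdeal k (n + e + 1) e with hJdef
    set Kt := (J ^ (r + 1) ⊔ Ideal.span {monomial mu (1:k) * monomial mv 1}) ⊔ Dt with hKt
    set vt : MvPolynomial (Fin (n + e + 1)) k := monomial (mv.mapDomain τt) 1 with hvt
    have haevalv : aeval σt (monomial mv (1:k)) = vt := by
      rw [hσt, hvt]
      exact St3.aeval_rename_monomial τt mv
    have haevalu : aeval σt (monomial mu (1:k)) = monomial mu 1 :=
      St3.aeval_monomial_fix σt mu fun l hl => hσlow l (hmu l hl)
    set Et := J ^ (r + 1) ⊔ Ideal.span {monomial mu (1:k) * vt} with hEt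
    -- (a) differences are in Dt
    have hDt : Ideal.span (Set.range fun l => X l - σt l) ≤ Dt := by
      rw [Ideal.span_le]
      rintro x ⟨l, rfl⟩
      show X l - σt l ∈ Dt
      by_cases hc : e + 1 ≤ (l : ℕ) ∧ (l : ℕ) < e + 1 + t
      · rw [hσeq, hτin l hc]
        refine Ideal.subset_span ?_
        show X l - X j0 ∈ rs.take t
        rw [List.mem_iff_getElem]
        have hs : (l : ℕ) - (e + 1) < (rs.take t).length := by
          rw [List.length_take, hlen]
          omega
        refine ⟨(l : ℕ) - (e + 1), hs, ?_⟩
        rw [List.getElem_take,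
          hrsget ((l : ℕ) - (e + 1)) (by rw [List.length_take] at hs; rw [hlen]; omega)]
        have hfin : (⟨e + 1 + ((l : ℕ) - (e + 1)), by omega⟩ : Fin (n + e + 1)) = l := by
          ext
          simp only
          omega
        rw [hfin]
      · rw [hσeq, hτl l hc, sub_self]
        exact zero_mem _
    -- (b) aeval σt maps Kt into Et
    have hmapK : ∀ g ∈ Kt, aeval σt g ∈ Et := by
      intro g hg
      rw [hKt] at hg
      obtain ⟨g12, hg12, g3, hg3, rfl⟩ := Submodule.mem_sup.mp hg
      obtain ⟨g1, hg1, g2, hg2, rfl⟩ := Submodule.mem_sup.mp hg12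
      obtain ⟨p, rfl⟩ := Ideal.mem_span_singleton'.mp hg2
      have h1 : aeval σt g1 ∈ J ^ (r + 1) :=
        St3.aeval_mem_pow_lowIdeal e (r + 1) σt hσlow g1 hg1
      have h2 : aeval σt (p * (monomial mu (1:k) * monomial mv 1))
          ∈ Ideal.span {monomial mu (1:k) * vt} := by
        rw [map_mul, map_mul, haevalu, haevalv]
        exact Ideal.mul_mem_left _ _ (Ideal.subset_span rfl)
      have h3 : aeval σt g3 = 0 := by
        have hker : Dt ≤ RingHom.ker (aeval σt : MvPolynomial (Fin (n + e + 1)) k →ₐ[k] _) := by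
          rw [hDtdef, Ideal.span_le]
          intro x hx
          obtain ⟨s, hslen, rfl⟩ := List.mem_iff_getElem.mp hx
          have hst : s < t ∧ s < n := by
            rw [List.length_take, hlen] at hslen
            omega
          rw [SetLike.mem_coe, RingHom.mem_ker]
          rw [List.getElem_take, hrsget s (by rw [hlen]; omega)]
          rw [map_sub, aeval_X, aeval_X, hσj0, hσeq,
            hτin (⟨e + 1 + s, by omega⟩ : Fin (n + e + 1)) (by simp only; omega), sub_self]
        have h10 := hker hg3
        rwa [RingHom.mem_ker] at h10
      rw [map_add, map_add, h3, add_zero, hEt]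
      exact Submodule.add_mem _ (Submodule.mem_sup_left h1) (Submodule.mem_sup_right h2)
    -- (c) Et ≤ Kt
    have hEK : Et ≤ Kt := by
      rw [hEt, hKt]
      refine sup_le (le_trans le_sup_left le_sup_left) ?_
      rw [Ideal.span_le]
      intro x hx
      rw [Set.mem_singleton_iff] at hx
      subst hx
      have hdiff : monomial mv (1:k) - aeval σt (monomial mv (1:k)) ∈ Dt :=
        hDt (St3.sub_aeval_mem_span σt (monomial mv (1:k)))
      have hsplit : monomial mu (1:k) * vt
          = monomial mu 1 * monomial mv 1
            - monomial mu 1 * (monomial mv 1 - aeval σt (monomial mv (1:k))) := by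
        rw [haevalv]
        ring
      rw [hsplit]
      refine sub_mem ?_ ?_
      · exact Submodule.mem_sup_left (Submodule.mem_sup_right (Ideal.subset_span rfl))
      · exact Submodule.mem_sup_right (Ideal.mul_mem_left _ _ hdiff)
    -- (d) conclude
    rw [hget] at hf
    have h1 : aeval σt ((X it - X j0) * f) ∈ Et := hmapK _ hf
    rw [map_mul, map_sub, aeval_X, aeval_X, hσit, hσj0] at h1
    have hmw' : ∀ l : Fin (n + e + 1), (mv.mapDomain τt) l ≠ 0 → e ≤ (l : ℕ) := by
      intro l hl
      have hls : l ∈ (mv.mapDomain τt).support := Finsupp.mem_support_iff.mpr hl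
      have hls2 := Finsupp.mapDomain_support hls
      rw [Finset.mem_image] at hls2
      obtain ⟨l', hl', rfl⟩ := hls2
      exact hτhigh l' (hmv l' (Finsupp.mem_support_iff.mp hl'))
    have h2 : aeval σt f ∈ Et := by
      rw [hEt, hvt]
      refine St3.key_colon e (r + 1) it j0 (by omega) (by omega) ?_ mu (mv.mapDomain τt)
        hmu hmw' _ ?_
      · intro hc
        have := congrArg (fun x : Fin (n + e + 1) => (x : ℕ)) hc
        simp only [hitv, hj0v] at this
        omega
      · rw [← hvt, ← hEt]
        exact h1
    have h3 : f = (f - aeval σt f) + aeval σt f := by ring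
    rw [h3]
    refine Submodule.add_mem _ ?_ (hEK h2)
    have := hDt (St3.sub_aeval_mem_span σt f)
    rw [hKt]
    exact Submodule.mem_sup_right (hDt (St3.sub_aeval_mem_span σt f))
  · -- nontriviality
    intro htop
    have hker : (lowIdeal k (n + e + 1) e ^ (r + 1)
        ⊔ Ideal.span {monomial mu (1:k) * monomial mv 1}) ⊔ Ideal.ofList rs
        ≤ RingHom.ker (constantCoeff : MvPolynomial (Fin (n + e + 1)) k →+* k) := by
      refine sup_le (sup_le ?_ ?_) ?_
      · intro x hx
        rw [RingHom.mem_ker]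
        by_contra hc
        have h0 : (0 : Fin (n + e + 1) →₀ ℕ) ∈ x.support := by
          rw [mem_support_iff]
          rwa [constantCoeff_eq] at hc
        have hle := St3.mem_pow_lowIdeal_imp e (r + 1) x hx 0 h0
        have hz : St3.lowDeg e (0 : Fin (n + e + 1) →₀ ℕ) = 0 := by
          refine Finset.sum_eq_zero fun l _ => ?_
          split <;> rfl
        omega
      · rw [Ideal.span_le]
        intro x hx
        rw [Set.mem_singleton_iff] at hx
        subst hx
        rw [SetLike.mem_coe, RingHom.mem_ker, map_mul, constantCoeff_monomial,
          constantCoeff_monomial, if_neg hmv0, mul_zero]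
      · rw [hrs, Ideal.span_le]
        intro x hx
        rw [Set.mem_setOf_eq, List.mem_ofFn] at hx
        obtain ⟨s, rfl⟩ := hx
        rw [SetLike.mem_coe, RingHom.mem_ker, hF]
        simp only
        rw [map_sub, constantCoeff_X, constantCoeff_X, sub_self]
    have h1 : (1 : MvPolynomial (Fin (n + e + 1)) k) ∈
        (lowIdeal k (n + e + 1) e ^ (r + 1)
          ⊔ Ideal.span {monomial mu (1:k) * monomial mv 1}) ⊔ Ideal.ofList rs := by
      rw [htop]
      trivial
    have h2 := hker h1
    rw [RingHom.mem_ker, map_one] at h2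
    exact one_ne_zero h2
end
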